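/- Suppose σ satisfies σ(B(x,r)) ≤ C₂·r^{n−αs} for all x ∈ ℝⁿ and r > 0, where C₂ > 0. Then there exists a constant C > 0, depending only on n, α, s and C₂, such that for all x ∈ ℝⁿ, all t > 0, and all y ∈ B(x,t), | ∫_t^∞ [ (σ(B(x,r))/r^{n−αs})^{1/(s−1)} − (σ(B(y,r))/r^{n−αs})^{1/(s−1)} ] dr/r | ≤ C. -/

import Mathlib

open MeasureTheory Metric Set Filter
open scoped ENNReal NNReal Topology

noncomputable section

/-- `n`-dimensional Euclidean space. -/
abbrev En (n : ℕ) : Type := EuclideanSpace ℝ (Fin n)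

/-- The truncated Wolff potential
`W^ρ_{α,s} μ (x) = ∫_0^ρ (μ(B(x,r))/r^{n-αs})^{1/(s-1)} dr/r`. -/
noncomputable def wolffT (n : ℕ) (α s : ℝ) (μ : Measure (En n)) (ρ : ℝ) (x : En n) : ℝ≥0∞ :=
  ∫⁻ r in Set.Ioo (0:ℝ) ρ,
    (μ (Metric.ball x r) / ENNReal.ofReal (r ^ ((n:ℝ) - α * s))) ^ (1/(s-1))
      * ENNReal.ofReal r⁻¹

/-- The (full) Wolff potential
`W_{α,s} μ (x) = ∫_0^∞ (μ(B(x,r))/r^{n-αs})^{1/(s-1)} dr/r`. -/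
noncomputable def wolff (n : ℕ) (α s : ℝ) (μ : Measure (En n)) (x : En n) : ℝ≥0∞ :=
  ∫⁻ r in Set.Ioi (0:ℝ),
    (μ (Metric.ball x r) / ENNReal.ofReal (r ^ ((n:ℝ) - α * s))) ^ (1/(s-1))
      * ENNReal.ofReal r⁻¹

/-- The truncated Riesz-type potential
`I^ρ μ (x) = ∫_0^ρ (μ(B(x,r))/r^{n-αs}) dr/r`. -/
noncomputable def rieszT (n : ℕ) (α s : ℝ) (μ : Measure (En n)) (ρ : ℝ) (x : En n) : ℝ≥0∞ :=
  ∫⁻ r in Set.Ioo (0:ℝ) ρ,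
    (μ (Metric.ball x r) / ENNReal.ofReal (r ^ ((n:ℝ) - α * s))) * ENNReal.ofReal r⁻¹

/-- The nonlinear operator `𝒩 f (x) = W_{α,s}(f^{s-1} dσ)(x)`. -/
noncomputable def Nop (n : ℕ) (α s : ℝ) (σ : Measure (En n)) (f : En n → ℝ≥0∞) (x : En n) :
    ℝ≥0∞ :=
  ∫⁻ r in Set.Ioi (0:ℝ),
    (ENNReal.ofReal (r ^ (α * s - (n:ℝ))) * ∫⁻ y in Metric.ball x r, (f y) ^ (s-1) ∂σ)
        ^ (1/(s-1))
      * ENNReal.ofReal r⁻¹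

/-- The Riesz potential `I_α f (x) = (n-α)⁻¹ ∫ f(y) |x-y|^{α-n} dy`. -/
noncomputable def rieszPot (n : ℕ) (α : ℝ) (f : En n → ℝ≥0∞) (x : En n) : ℝ≥0∞ :=
  ENNReal.ofReal (((n:ℝ) - α)⁻¹) * ∫⁻ y, f y * ENNReal.ofReal (‖x - y‖ ^ (α - (n:ℝ)))

/-- The Riesz capacity `cap_{α,s}(A) = inf { ∫ f^s : f ≥ 0, I_α f ≥ 1 on A }`. -/
noncomputable def rieszCap (n : ℕ) (α s : ℝ) (A : Set (En n)) : ℝ≥0∞ :=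
  ⨅ (f : En n → ℝ≥0∞) (_ : Measurable f) (_ : ∀ x ∈ A, 1 ≤ rieszPot n α f x),
    ∫⁻ y, (f y) ^ s

/-- Extended exponential: `eexp x = exp x` for finite `x`, with `eexp ∞ = ∞`. -/
noncomputable def eexp (x : ℝ≥0∞) : ℝ≥0∞ :=
  if x = ∞ then ∞ else ENNReal.ofReal (Real.exp x.toReal)


open intervalIntegral in
lemma half_rpow' {u p : ℝ} (hu : 0 ≤ u) : (u/2)^p = 2^(-p) * u^p := by
  rw [Real.div_rpow hu (by norm_num), Real.rpow_neg (by norm_num), div_eq_mul_inv, mul_comm]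

open intervalIntegral in
lemma mvt_rpow {β x y : ℝ} (hβ : 0 < β) (hx : 0 < x) (hxy : x ≤ y) :
    x ^ (-β) - y ^ (-β) ≤ β * ((y - x) * x ^ (-β - 1)) := by
  have h0 : (0:ℝ) ∉ Set.uIcc x y := by
    rw [Set.uIcc_of_le hxy]
    exact fun h => absurd h.1 hx.not_ge
  have hint : ∫ v in x..y, v ^ (-β - 1) = (y ^ (-β) - x ^ (-β)) / (-β) := by
    rw [integral_rpow (Or.inr ⟨by intro h; apply hβ.ne'; linarith, h0⟩)]
    norm_num
  have hmono : (∫ v in x..y, v ^ (-β - 1)) ≤ (y - x) * x ^ (-β - 1) := by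
    have hconst : (∫ _ in x..y, x ^ (-β - 1)) = (y - x) * x ^ (-β - 1) := by
      simp [intervalIntegral.integral_const, smul_eq_mul]
    rw [← hconst]
    apply intervalIntegral.integral_mono_on hxy ?_ intervalIntegrable_const
    · intro v hv
      exact Real.rpow_le_rpow_of_nonpos hx hv.1 (by linarith)
    · apply ContinuousOn.intervalIntegrable
      apply ContinuousOn.rpow_const continuousOn_id
      intro v hv
      rw [Set.uIcc_of_le hxy] at hv
      exact Or.inl (hx.trans_le hv.1).ne'
  calc x ^ (-β) - y ^ (-β) = β * ((y ^ (-β) - x ^ (-β)) / (-β)) := by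
        rw [div_neg, mul_neg, mul_div_cancel₀ _ hβ.ne']
        ring
      _ = β * ∫ v in x..y, v ^ (-β - 1) := by rw [hint]
      _ ≤ β * ((y - x) * x ^ (-β - 1)) := mul_le_mul_of_nonneg_left hmono hβ.le

open intervalIntegral in
lemma key_tail (β t M : ℝ) (hβ : 1 < β) (ht : 0 < t) (hM : 0 ≤ M)
    (ψ : ℝ → ℝ) (hmono : Monotone ψ) (h0 : ∀ r, 0 ≤ ψ r)
    (hgrow : ∀ r, 0 < r → ψ r ≤ M * r ^ (β - 1)) :
    MeasureTheory.IntegrableOn (fun r => (ψ (r + t) - ψ r) * r ^ (-β)) (Set.Ioi t) ∧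
    (∫ r in Set.Ioi t, (ψ (r + t) - ψ r) * r ^ (-β)) ≤ M * β * 2 ^ β := by
  have hβ0 : (0:ℝ) < β := by linarith
  set g : ℝ → ℝ := fun r => (ψ (r + t) - ψ r) * r ^ (-β) with hgdef
  -- interval integrability of kernels
  have hker : ∀ (φ : ℝ → ℝ), Monotone φ → ∀ c a b : ℝ, c < a → c < b →
      IntervalIntegrable (fun u => φ u * (u - c) ^ (-β)) volume a b := by
    intro φ hφ c a b ha hb
    refine hφ.intervalIntegrable.mul_continuousOn ?_
    apply ContinuousOn.rpow_const (continuousOn_id.sub continuousOn_const)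
    intro u hu
    left
    rcases Set.mem_uIcc.mp hu with ⟨h1, _⟩ | ⟨h1, _⟩ <;>
      · have : c < u := by linarith
        exact sub_ne_zero.mpr this.ne'
  have hshift : Monotone (fun r : ℝ => ψ (r + t)) :=
    hmono.comp (monotone_id.add_const t)
  have hψ0k : ∀ a b : ℝ, 0 < a → 0 < b →
      IntervalIntegrable (fun u => ψ u * u ^ (-β)) volume a b := by
    intro a b ha hb
    have := hker ψ hmono 0 a b ha hb
    simpa using this
  have hψtk : ∀ a b : ℝ, 0 < a → 0 < b →
      IntervalIntegrable (fun u => ψ (u + t) * u ^ (-β)) volume a b := by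
    intro a b ha hb
    have := hker (fun r => ψ (r + t)) hshift 0 a b ha hb
    simpa using this
  have hg_nn : ∀ r, 0 ≤ r → 0 ≤ g r := fun r hr =>
    mul_nonneg (sub_nonneg.mpr (hmono (by linarith))) (Real.rpow_nonneg hr _)
  -- the main finite-interval bound
  have hbdd : ∀ R, 2*t ≤ R → (∫ r in t..R, g r) ≤ M * β * 2^β + M * 2^(2*β-1) * t / R := by
    intro R hR
    have htR : t ≤ R := by linarith
    have hR0 : 0 < R := by linarith
    have e0 : (∫ r in t..R, g r)
        = (∫ r in t..R, ψ (r+t) * r ^ (-β)) - ∫ r in t..R, ψ r * r ^ (-β) := by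
      rw [← intervalIntegral.integral_sub (hψtk t R ht hR0) (hψ0k t R ht hR0)]
      apply intervalIntegral.integral_congr
      intro u _
      simp [hgdef, sub_mul]
    have e1 : (∫ r in t..R, ψ (r+t) * r ^ (-β))
        = ∫ u in (2*t)..(R+t), ψ u * (u - t) ^ (-β) := by
      have h := intervalIntegral.integral_comp_add_right
        (a := t) (b := R) (fun u => ψ u * (u - t) ^ (-β)) t
      simp only [add_sub_cancel_right] at h
      rw [h, two_mul]
    have isplit1 : (∫ u in (2*t)..(R+t), ψ u * (u-t) ^ (-β))
        = (∫ u in (2*t)..R, ψ u * (u-t) ^ (-β)) + ∫ u in R..(R+t), ψ u * (u-t) ^ (-β) :=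
      (intervalIntegral.integral_add_adjacent_intervals
        (hker ψ hmono t _ _ (by linarith) (by linarith))
        (hker ψ hmono t _ _ (by linarith) (by linarith))).symm
    have isplit2 : (∫ u in t..R, ψ u * u ^ (-β))
        = (∫ u in t..(2*t), ψ u * u ^ (-β)) + ∫ u in (2*t)..R, ψ u * u ^ (-β) :=
      (intervalIntegral.integral_add_adjacent_intervals
        (hψ0k t (2*t) ht (by linarith)) (hψ0k (2*t) R (by linarith) hR0)).symm
    -- Term A
    have hTA : (∫ u in (2*t)..R, ψ u * (u-t) ^ (-β)) - (∫ u in (2*t)..R, ψ u * u ^ (-β))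
        ≤ M * β * 2^β := by
      have hcomb : (∫ u in (2*t)..R, ψ u * (u-t) ^ (-β)) - (∫ u in (2*t)..R, ψ u * u ^ (-β))
          = ∫ u in (2*t)..R, ψ u * ((u-t) ^ (-β) - u ^ (-β)) := by
        rw [← intervalIntegral.integral_sub (hker ψ hmono t _ _ (by linarith) (by linarith))
          (hψ0k (2*t) R (by linarith) hR0)]
        apply intervalIntegral.integral_congr
        intro u _
        ring
      rw [hcomb]
      have hmono2 : (∫ u in (2*t)..R, ψ u * ((u-t) ^ (-β) - u ^ (-β)))
          ≤ ∫ u in (2*t)..R, (M*β*t*2^(β+1)) * u ^ (-2:ℝ) := by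
        apply intervalIntegral.integral_mono_on hR
          (by
            have h' := (hker ψ hmono t (2*t) R (by linarith) (by linarith)).sub
              (hψ0k (2*t) R (by linarith) hR0)
            simpa only [← mul_sub] using h')
          (by
            apply ContinuousOn.intervalIntegrable
            apply ContinuousOn.mul continuousOn_const
            apply ContinuousOn.rpow_const continuousOn_id
            intro u hu
            rw [Set.uIcc_of_le hR] at hu
            left
            have : 0 < u := lt_of_lt_of_le (by linarith) hu.1
            exact this.ne')
        · intro u hu
          obtain ⟨hu1, hu2⟩ := hu
          have hu0 : 0 < u := by linarith
          have hut : 0 < u - t := by linarith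
          have huh : u/2 ≤ u - t := by linarith
          have hsubnn : 0 ≤ (u-t) ^ (-β) - u ^ (-β) :=
            sub_nonneg.mpr (Real.rpow_le_rpow_of_nonpos hut (by linarith) (by linarith))
          have h3 : (u-t) ^ (-β) - u ^ (-β) ≤ β * (t * (u-t) ^ (-β-1)) := by
            have := mvt_rpow hβ0 hut (by linarith : u - t ≤ u)
            have e : u - (u - t) = t := by ring
            rwa [e] at this
          have h4 : (u-t) ^ (-β-1) ≤ 2^(β+1) * u ^ (-β-1) := by
            calc (u-t) ^ (-β-1) ≤ (u/2) ^ (-β-1) :=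
                  Real.rpow_le_rpow_of_nonpos (by positivity) huh (by linarith)
              _ = 2^(β+1) * u ^ (-β-1) := by
                  rw [half_rpow' hu0.le, show -(-β-1) = β+1 by ring]
          have hexp : u ^ (β-1) * u ^ (-β-1) = u ^ (-2:ℝ) := by
            rw [← Real.rpow_add hu0]; congr 1; ring
          calc ψ u * ((u-t) ^ (-β) - u ^ (-β))
              ≤ (M * u ^ (β-1)) * ((u-t) ^ (-β) - u ^ (-β)) :=
                mul_le_mul_of_nonneg_right (hgrow u hu0) hsubnn
            _ ≤ (M * u ^ (β-1)) * (β * (t * (2^(β+1) * u ^ (-β-1)))) := by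
                apply mul_le_mul_of_nonneg_left ?_ (by positivity)
                refine h3.trans ?_
                apply mul_le_mul_of_nonneg_left ?_ hβ0.le
                exact mul_le_mul_of_nonneg_left h4 ht.le
            _ = (M*β*t*2^(β+1)) * u ^ (-2:ℝ) := by
                linear_combination (M*β*t*2^(β+1)) * hexp
      refine hmono2.trans ?_
      have hnotmem : (0:ℝ) ∉ Set.uIcc (2*t) R := by
        rw [Set.uIcc_of_le hR]
        exact fun h => absurd h.1 (by linarith)
      have hval : (∫ u in (2*t)..R, (M*β*t*2^(β+1)) * u ^ (-2:ℝ))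
          = (M*β*t*2^(β+1)) * ((2*t)⁻¹ - R⁻¹) := by
        rw [intervalIntegral.integral_const_mul,
          integral_rpow (Or.inr ⟨by norm_num, hnotmem⟩)]
        norm_num [Real.rpow_neg_one]
        exact Or.inl (by ring)
      rw [hval]
      have h2β : (2:ℝ)^(β+1) = 2^β * 2 := by
        rw [Real.rpow_add (by norm_num : (0:ℝ) < 2), Real.rpow_one]
      have hstep : (M*β*t*2^(β+1)) * ((2*t)⁻¹ - R⁻¹) ≤ (M*β*t*2^(β+1)) * (2*t)⁻¹ := by
        apply mul_le_mul_of_nonneg_left ?_ (by positivity)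
        have : 0 ≤ R⁻¹ := by positivity
        linarith
      refine hstep.trans (le_of_eq ?_)
      rw [h2β]
      field_simp
    -- Term B
    have hTB : (∫ u in R..(R+t), ψ u * (u-t) ^ (-β)) ≤ M * 2^(2*β-1) * t / R := by
      have hbnd : ∀ u ∈ Set.Icc R (R+t), ψ u * (u-t) ^ (-β)
          ≤ (M * (2*R) ^ (β-1)) * ((R/2) ^ (-β)) := by
        intro u hu
        obtain ⟨hu1, hu2⟩ := hu
        have hu0 : 0 < u := by linarith
        have h1 : ψ u ≤ M * (2*R) ^ (β-1) := by
          refine (hgrow u hu0).trans ?_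
          apply mul_le_mul_of_nonneg_left ?_ hM
          exact Real.rpow_le_rpow hu0.le (by linarith) (by linarith)
        have h2 : (u - t) ^ (-β) ≤ (R/2) ^ (-β) :=
          Real.rpow_le_rpow_of_nonpos (by positivity) (by linarith) (by linarith)
        exact mul_le_mul h1 h2 (Real.rpow_nonneg (by linarith) _) (by positivity)
      have hint : (∫ u in R..(R+t), ψ u * (u-t) ^ (-β))
          ≤ M * (2*R) ^ (β-1) * (t * (R/2) ^ (-β)) := by
        have h := intervalIntegral.integral_mono_on (by linarith : R ≤ R+t)
          (hker ψ hmono t R (R+t) (by linarith) (by linarith)) intervalIntegrable_const hbnd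
        simpa using h
      refine hint.trans (le_of_eq ?_)
      have e1 : ((2:ℝ)*R) ^ (β-1) = 2^(β-1) * R^(β-1) := Real.mul_rpow (by norm_num) hR0.le
      have e2 : ((R:ℝ)/2) ^ (-β) = 2^β * R^(-β) := by rw [half_rpow' hR0.le, neg_neg]
      have e3 : (R:ℝ)^(β-1) * R^(-β) = R⁻¹ := by
        rw [← Real.rpow_add hR0, show β-1 + -β = -1 by ring, Real.rpow_neg_one]
      have e4 : (2:ℝ)^(β-1) * 2^β = 2^(2*β-1) := by
        rw [← Real.rpow_add (by norm_num : (0:ℝ) < 2)]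
        congr 1
        ring
      calc M * (2*R)^(β-1) * (t * (R/2)^(-β))
          = M * ((2:ℝ)^(β-1) * 2^β) * ((R:ℝ)^(β-1) * R^(-β)) * t := by rw [e1, e2]; ring
        _ = M * 2^(2*β-1) * t / R := by rw [e3, e4, div_eq_mul_inv]; ring
    -- Term D
    have hTD : 0 ≤ ∫ u in t..(2*t), ψ u * u ^ (-β) := by
      apply intervalIntegral.integral_nonneg (by linarith)
      intro u hu
      exact mul_nonneg (h0 u) (Real.rpow_nonneg (by linarith [hu.1]) _)
    rw [e0, e1, isplit1, isplit2]
    linarith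
  -- integrability on Ioi t
  have hgii : ∀ a b : ℝ, 0 < a → 0 < b → IntervalIntegrable g volume a b := by
    intro a b ha hb
    have h' := (hψtk a b ha hb).sub (hψ0k a b ha hb)
    simpa only [← sub_mul] using h'
  have hfi : ∀ i : ℝ, MeasureTheory.IntegrableOn g (Set.Ioc t i) := by
    intro i
    rcases le_or_gt t i with h | h
    · exact (hgii t i ht (by linarith)).1
    · rw [Set.Ioc_eq_empty (by linarith)]
      exact MeasureTheory.integrableOn_empty
  have hInt : MeasureTheory.IntegrableOn g (Set.Ioi t) := by
    apply MeasureTheory.integrableOn_Ioi_of_intervalIntegral_norm_bounded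
      (M*β*2^β + M*2^(2*β-1) * (1/2)) t (fun i : ℝ => hfi i) (tendsto_id (x := atTop))
    filter_upwards [eventually_ge_atTop (2*t)] with i hi
    have hnorm : (∫ x in t..i, ‖g x‖) = ∫ x in t..i, g x := by
      apply intervalIntegral.integral_congr
      intro x hx
      rw [Set.uIcc_of_le (by linarith)] at hx
      exact Real.norm_of_nonneg (hg_nn x (by linarith [hx.1]))
    rw [hnorm]
    refine (hbdd i hi).trans ?_
    have hi0 : 0 < i := by linarith
    have htdiv : t / i ≤ 1/2 := by
      rw [div_le_div_iff₀ hi0 (by norm_num)]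
      linarith
    have heq : M*2^(2*β-1)*t/i = M*2^(2*β-1)*(t/i) := by ring
    rw [heq]
    have h2 : (0:ℝ) ≤ M*2^(2*β-1) := by positivity
    nlinarith [mul_le_mul_of_nonneg_left htdiv h2]
  refine ⟨hInt, ?_⟩
  have hT := MeasureTheory.intervalIntegral_tendsto_integral_Ioi t hInt (tendsto_id (x := atTop))
  have h1 : Tendsto (fun R : ℝ => (M*2^(2*β-1)*t) * R⁻¹) atTop (𝓝 ((M*2^(2*β-1)*t) * 0)) :=
    tendsto_inv_atTop_zero.const_mul _
  rw [mul_zero] at h1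
  have hlim : Tendsto (fun R : ℝ => M*β*2^β + M*2^(2*β-1)*t/R) atTop (𝓝 (M*β*2^β)) := by
    have he : (fun R : ℝ => M*β*2^β + M*2^(2*β-1)*t/R)
        = fun R : ℝ => M*β*2^β + (M*2^(2*β-1)*t) * R⁻¹ := by
      funext R
      ring
    rw [he]
    simpa using Tendsto.add (tendsto_const_nhds (x := M*β*2^β) (f := atTop)) h1
  exact le_of_tendsto_of_tendsto hT hlim
    (by filter_upwards [eventually_ge_atTop (2*t)] with R hR; exact hbdd R hR)

/-- if `σ(B(x,r)) ≤ C₂ r^{n-αs}` for all balls, then the tail of the Wolff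
potential is nearly constant: there is `C = C(n,α,s,C₂) > 0` with
`|∫_t^∞ [(σ(B(x,r))/r^{n-αs})^{1/(s-1)} - (σ(B(y,r))/r^{n-αs})^{1/(s-1)}] dr/r| ≤ C`
for every `x`, `t > 0` and `y ∈ B(x,t)`. -/
theorem statement4 (n : ℕ) (hn : 2 ≤ n) (α s : ℝ) (hs : 1 < s) (hα : 0 < α)
    (hαs : α * s < n) (C₂ : ℝ) (hC₂ : 0 < C₂) :
    ∃ C : ℝ, 0 < C ∧
      ∀ σ : Measure (En n), IsLocallyFiniteMeasure σ →
        (∀ (z : En n) (r : ℝ), 0 < r →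
          σ (Metric.ball z r) ≤ ENNReal.ofReal (C₂ * r ^ ((n:ℝ) - α * s))) →
        ∀ (x y : En n) (t : ℝ), 0 < t → y ∈ Metric.ball x t →
          |∫ r in Set.Ioi t,
              (((σ (Metric.ball x r)).toReal / r ^ ((n:ℝ) - α * s)) ^ (1/(s-1))
                - ((σ (Metric.ball y r)).toReal / r ^ ((n:ℝ) - α * s)) ^ (1/(s-1))) / r|
            ≤ C := by
  have hs1 : 0 < s - 1 := by linarith
  set γ : ℝ := 1/(s-1) with hγdef
  have hγ : 0 < γ := by positivity
  set κ : ℝ := (n:ℝ) - α * s with hκdef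
  have hκ : 0 < κ := sub_pos.mpr hαs
  set β : ℝ := κ * γ + 1 with hβdef
  have hβ : 1 < β := by nlinarith [mul_pos hκ hγ]
  set M : ℝ := C₂ ^ γ with hMdef
  have hM : 0 < M := Real.rpow_pos_of_pos hC₂ γ
  have h2β : (0:ℝ) < 2 ^ β := Real.rpow_pos_of_pos two_pos β
  refine ⟨2 * (M * β * 2^β) + 1, by nlinarith [mul_pos (mul_pos hM (show (0:ℝ) < β by linarith)) h2β], ?_⟩
  intro σ hloc hgrow x y t ht hyt
  have hfin : ∀ z u, σ (Metric.ball z u) ≠ ⊤ := by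
    intro z u
    rcases le_or_gt u 0 with h | h
    · rw [Metric.ball_eq_empty.2 h]
      simp
    · exact ne_top_of_le_ne_top ENNReal.ofReal_ne_top (hgrow z u h)
  set ψ : En n → ℝ → ℝ := fun z u => (σ (Metric.ball z u)).toReal ^ γ with hψdef
  have hψmono : ∀ z, Monotone (ψ z) := by
    intro z u v huv
    apply Real.rpow_le_rpow ENNReal.toReal_nonneg ?_ hγ.le
    exact ENNReal.toReal_mono (hfin z v) (measure_mono (Metric.ball_subset_ball huv))
  have hψ0 : ∀ z r, 0 ≤ ψ z r := fun z r => Real.rpow_nonneg ENNReal.toReal_nonneg _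
  have hψgrow : ∀ z r, 0 < r → ψ z r ≤ M * r ^ (β - 1) := by
    intro z r hr
    have h1 : (σ (Metric.ball z r)).toReal ≤ C₂ * r ^ κ :=
      ENNReal.toReal_le_of_le_ofReal (by positivity) (hgrow z r hr)
    have h2 : ψ z r ≤ (C₂ * r ^ κ) ^ γ := Real.rpow_le_rpow ENNReal.toReal_nonneg h1 hγ.le
    refine h2.trans (le_of_eq ?_)
    rw [Real.mul_rpow hC₂.le (by positivity), ← Real.rpow_mul hr.le, hMdef]
    congr 1
    rw [hβdef]
    ring
  have hx := key_tail β t M hβ ht hM.le (ψ x) (hψmono x) (hψ0 x) (hψgrow x)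
  have hy := key_tail β t M hβ ht hM.le (ψ y) (hψmono y) (hψ0 y) (hψgrow y)
  set G : ℝ → ℝ := fun r => (ψ x (r+t) - ψ x r) * r^(-β) + (ψ y (r+t) - ψ y r) * r^(-β)
    with hGdef
  have hGint : MeasureTheory.IntegrableOn G (Set.Ioi t) := hx.1.add hy.1
  have hdist : dist x y < t := by
    rw [dist_comm]
    exact Metric.mem_ball.mp hyt
  set F : ℝ → ℝ := fun r => (((σ (Metric.ball x r)).toReal / r ^ κ) ^ γ
      - ((σ (Metric.ball y r)).toReal / r ^ κ) ^ γ) / r with hFdef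
  have hFle : ∀ r ∈ Set.Ioi t, ‖F r‖ ≤ G r := by
    intro r hr
    have hrt : t < r := hr
    have hr0 : 0 < r := ht.trans hrt
    have hrκ : 0 < r ^ κ := Real.rpow_pos_of_pos hr0 κ
    have hsub1 : Metric.ball x r ⊆ Metric.ball y (r+t) :=
      Metric.ball_subset_ball' (by linarith)
    have hsub2 : Metric.ball y r ⊆ Metric.ball x (r+t) :=
      Metric.ball_subset_ball' (by rw [dist_comm]; linarith)
    have hA1 : ψ x r ≤ ψ y (r+t) :=
      Real.rpow_le_rpow ENNReal.toReal_nonneg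
        (ENNReal.toReal_mono (hfin y (r+t)) (measure_mono hsub1)) hγ.le
    have hA2 : ψ y r ≤ ψ x (r+t) :=
      Real.rpow_le_rpow ENNReal.toReal_nonneg
        (ENNReal.toReal_mono (hfin x (r+t)) (measure_mono hsub2)) hγ.le
    have hA3 : ψ x r ≤ ψ x (r+t) := hψmono x (by linarith)
    have hA4 : ψ y r ≤ ψ y (r+t) := hψmono y (by linarith)
    have habs : |ψ x r - ψ y r| ≤ (ψ x (r+t) - ψ x r) + (ψ y (r+t) - ψ y r) :=
      abs_sub_le_iff.mpr ⟨by linarith, by linarith⟩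
    have hFr : F r = (ψ x r - ψ y r) / ((r ^ κ) ^ γ * r) := by
      simp only [hFdef, hψdef]
      rw [Real.div_rpow ENNReal.toReal_nonneg hrκ.le,
        Real.div_rpow ENNReal.toReal_nonneg hrκ.le, div_sub_div_same, div_div]
    have hPr : (r ^ κ) ^ γ * r = r ^ β := by
      rw [hβdef, Real.rpow_add hr0, Real.rpow_one, ← Real.rpow_mul hr0.le]
    have hrβ : r ^ (-β) = ((r ^ κ) ^ γ * r)⁻¹ := by
      rw [Real.rpow_neg hr0.le, hPr]
    have hGr : G r = ((ψ x (r+t) - ψ x r) + (ψ y (r+t) - ψ y r)) * r ^ (-β) := by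
      simp only [hGdef]
      ring
    rw [hFr, hGr, hrβ, Real.norm_eq_abs, abs_div,
      abs_of_pos (by positivity : (0:ℝ) < (r^κ)^γ * r), div_eq_mul_inv]
    exact mul_le_mul_of_nonneg_right habs (by positivity)
  have hmeasz : ∀ z : En n, Measurable fun r : ℝ => (σ (Metric.ball z r)).toReal := by
    intro z
    apply ENNReal.measurable_toReal.comp
    apply Monotone.measurable
    intro u v huv
    exact measure_mono (Metric.ball_subset_ball huv)
  have hFmeas : Measurable F := by
    have hpow : Measurable fun p : ℝ => p ^ γ := by fun_prop
    have hrκm : Measurable fun r : ℝ => r ^ κ := by fun_prop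
    exact (((hpow.comp ((hmeasz x).div hrκm)).sub
      (hpow.comp ((hmeasz y).div hrκm))).div measurable_id)
  have hFint : MeasureTheory.IntegrableOn F (Set.Ioi t) := by
    apply MeasureTheory.Integrable.mono' hGint hFmeas.aestronglyMeasurable.restrict
    rw [MeasureTheory.ae_restrict_iff' measurableSet_Ioi]
    exact MeasureTheory.ae_of_all _ hFle
  calc |∫ r in Set.Ioi t, F r| = ‖∫ r in Set.Ioi t, F r‖ := (Real.norm_eq_abs _).symm
    _ ≤ ∫ r in Set.Ioi t, ‖F r‖ := MeasureTheory.norm_integral_le_integral_norm _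
    _ ≤ ∫ r in Set.Ioi t, G r :=
        MeasureTheory.setIntegral_mono_on hFint.norm hGint measurableSet_Ioi hFle
    _ = (∫ r in Set.Ioi t, (ψ x (r+t) - ψ x r) * r^(-β))
        + ∫ r in Set.Ioi t, (ψ y (r+t) - ψ y r) * r^(-β) :=
        MeasureTheory.integral_add hx.1 hy.1
    _ ≤ M*β*2^β + M*β*2^β := add_le_add hx.2 hy.2
    _ ≤ 2 * (M * β * 2^β) + 1 := by linarith
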